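/- Atomic probabilities of a staged tree model determine the stage parameters: if y, y′ ∈ Θ_T give the same atomic probabilities, i.e., ∏_{i=1}^p y_{θ(x_1,…,x_i)} = ∏_{i=1}^p y′_{θ(x_1,…,x_i)} for all x ∈ 𝕏, and additionally each stage contains a vertex reachable with positive prefix probability (which holds automatically since all parameters are in (0,1)), then y = y′. -/

import Mathlib

open Finset

section Aux

variable {p : ℕ} {X : Fin p → Type} [∀ i, Fintype (X i)] {S : Type}
  {σ : (i : Fin p) → (∀ j, X j) → S}

lemma stage_insert (k : ℕ) (hk : k < p) :
    (Finset.univ.filter (fun j : Fin p => (j:ℕ) < k + 1))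
      = insert (⟨k, hk⟩ : Fin p) (Finset.univ.filter (fun j : Fin p => (j:ℕ) < k)) := by
  ext j
  simp [Nat.lt_succ_iff_lt_or_eq, Fin.ext_iff, or_comm]
  exact ⟨fun h => by omega, fun h => by omega⟩

lemma stage_update
    (hσ : ∀ (i : Fin p) (x x' : ∀ j, X j),
      (∀ j : Fin p, j < i → x j = x' j) → σ i x = σ i x')
    (k : ℕ) (hk : k < p) (x : ∀ j, X j) (a : X ⟨k, hk⟩) (j : Fin p) (hj : (j:ℕ) ≤ k) :
    σ j (Function.update x ⟨k, hk⟩ a) = σ j x := by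
  apply hσ
  intro j' hj'
  have hne : j' ≠ ⟨k, hk⟩ := by
    intro h
    rw [h] at hj'
    exact absurd (lt_of_lt_of_le hj' hj) (lt_irrefl _)
  simp [Function.update_of_ne hne]

lemma sum_update
    (hσ : ∀ (i : Fin p) (x x' : ∀ j, X j),
      (∀ j : Fin p, j < i → x j = x' j) → σ i x = σ i x')
    (z : (i : Fin p) → S → X i → ℝ)
    (hzsum : ∀ (i : Fin p) (x : ∀ j, X j), ∑ a : X i, z i (σ i x) a = 1)
    (k : ℕ) (hk : k < p) (x : ∀ j, X j) :
    ∑ a : X ⟨k, hk⟩,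
      ∏ j ∈ Finset.univ.filter (fun j : Fin p => (j:ℕ) < k + 1),
        z j (σ j (Function.update x ⟨k, hk⟩ a)) ((Function.update x ⟨k, hk⟩ a) j)
    = ∏ j ∈ Finset.univ.filter (fun j : Fin p => (j:ℕ) < k), z j (σ j x) (x j) := by
  set i : Fin p := ⟨k, hk⟩ with hi
  have hnot : i ∉ Finset.univ.filter (fun j : Fin p => (j:ℕ) < k) := by simp [hi]
  have hterm : ∀ a : X i,
      ∏ j ∈ Finset.univ.filter (fun j : Fin p => (j:ℕ) < k + 1),
        z j (σ j (Function.update x i a)) ((Function.update x i a) j)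
      = z i (σ i x) a *
        ∏ j ∈ Finset.univ.filter (fun j : Fin p => (j:ℕ) < k), z j (σ j x) (x j) := by
    intro a
    rw [stage_insert k hk, Finset.prod_insert hnot]
    congr 1
    · rw [stage_update hσ k hk x a i le_rfl, Function.update_self]
    · apply Finset.prod_congr rfl
      intro j hj
      have hjk : (j:ℕ) < k := by simpa using hj
      have hne : j ≠ i := by
        intro h; rw [h] at hjk; exact absurd hjk (lt_irrefl _)
      rw [stage_update hσ k hk x a j (le_of_lt hjk), Function.update_of_ne hne]
  calc ∑ a : X i, ∏ j ∈ Finset.univ.filter (fun j : Fin p => (j:ℕ) < k + 1),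
        z j (σ j (Function.update x i a)) ((Function.update x i a) j)
      = ∑ a : X i, z i (σ i x) a *
          ∏ j ∈ Finset.univ.filter (fun j : Fin p => (j:ℕ) < k), z j (σ j x) (x j) := by
        exact Finset.sum_congr rfl fun a _ => hterm a
    _ = (∑ a : X i, z i (σ i x) a) *
          ∏ j ∈ Finset.univ.filter (fun j : Fin p => (j:ℕ) < k), z j (σ j x) (x j) := by
        rw [← Finset.sum_mul]
    _ = _ := by rw [hzsum i x, one_mul]

end Aux

/-- Identifiability of the staged tree parametrization: if two parameter
assignments `y, y'` (values in `(0,1)`, summing to one over each used stage) give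
the same atomic probabilities `∏ i, y i (σ i x) (x i)` for every atom `x`, then
they agree on every stage containing a vertex. Here `σ i x ∈ S` is the stage of
the depth-`i` vertex given by the prefix of `x`, depending only on coordinates
`j < i`. -/
theorem staged_tree_parameters_identifiable
    (p : ℕ) (X : Fin p → Type) [∀ i, Fintype (X i)] [∀ i, Nonempty (X i)]
    (S : Type)
    (σ : (i : Fin p) → (∀ j, X j) → S)
    (hσ : ∀ (i : Fin p) (x x' : ∀ j, X j),
      (∀ j : Fin p, j < i → x j = x' j) → σ i x = σ i x')
    (y y' : (i : Fin p) → S → X i → ℝ)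
    (hy : ∀ (i : Fin p) (x : ∀ j, X j) (a : X i), y i (σ i x) a ∈ Set.Ioo (0:ℝ) 1)
    (hy' : ∀ (i : Fin p) (x : ∀ j, X j) (a : X i), y' i (σ i x) a ∈ Set.Ioo (0:ℝ) 1)
    (hsum : ∀ (i : Fin p) (x : ∀ j, X j), ∑ a : X i, y i (σ i x) a = 1)
    (hsum' : ∀ (i : Fin p) (x : ∀ j, X j), ∑ a : X i, y' i (σ i x) a = 1)
    (heq : ∀ x : ∀ j, X j,
      ∏ i : Fin p, y i (σ i x) (x i) = ∏ i : Fin p, y' i (σ i x) (x i)) :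
    ∀ (i : Fin p) (x : ∀ j, X j) (a : X i), y i (σ i x) a = y' i (σ i x) a := by
  classical
  -- prefix-product equality at every depth, by downward induction
  have Qstep : ∀ k : ℕ,
      (∀ x : ∀ j, X j,
        ∏ j ∈ Finset.univ.filter (fun j : Fin p => (j:ℕ) < k + 1), y j (σ j x) (x j)
        = ∏ j ∈ Finset.univ.filter (fun j : Fin p => (j:ℕ) < k + 1), y' j (σ j x) (x j)) →
      ∀ x : ∀ j, X j,
        ∏ j ∈ Finset.univ.filter (fun j : Fin p => (j:ℕ) < k), y j (σ j x) (x j)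
        = ∏ j ∈ Finset.univ.filter (fun j : Fin p => (j:ℕ) < k), y' j (σ j x) (x j) := by
    intro k hQ x
    by_cases hk : k < p
    · rw [← sum_update hσ y hsum k hk x, ← sum_update hσ y' hsum' k hk x]
      exact Finset.sum_congr rfl fun a _ => hQ _
    · have hfe : (Finset.univ.filter (fun j : Fin p => (j:ℕ) < k))
          = Finset.univ.filter (fun j : Fin p => (j:ℕ) < k + 1) := by
        ext j
        have h1 : (j:ℕ) < k := lt_of_lt_of_le j.isLt (le_of_not_gt hk)
        simp [h1, Nat.lt_succ_of_lt h1]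
        omega
      rw [hfe]
      exact hQ x
  have Qd : ∀ d : ℕ, ∀ x : ∀ j, X j,
      ∏ j ∈ Finset.univ.filter (fun j : Fin p => (j:ℕ) < p - d), y j (σ j x) (x j)
      = ∏ j ∈ Finset.univ.filter (fun j : Fin p => (j:ℕ) < p - d), y' j (σ j x) (x j) := by
    intro d
    induction d with
    | zero =>
      intro x
      have hfu : (Finset.univ.filter (fun j : Fin p => (j:ℕ) < p - 0)) = Finset.univ := by
        ext j; simp [j.isLt]
      rw [hfu]
      exact heq x
    | succ d ih =>
      by_cases hd : d < p
      · have hpd : p - (d + 1) + 1 = p - d := by omega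
        intro x
        apply Qstep (p - (d+1)) _ x
        rw [hpd]
        exact ih
      · have : p - (d + 1) = p - d := by omega
        rw [this]
        exact ih
  have Qall : ∀ k : ℕ, k ≤ p → ∀ x : ∀ j, X j,
      ∏ j ∈ Finset.univ.filter (fun j : Fin p => (j:ℕ) < k), y j (σ j x) (x j)
      = ∏ j ∈ Finset.univ.filter (fun j : Fin p => (j:ℕ) < k), y' j (σ j x) (x j) := by
    intro k hk
    have : p - (p - k) = k := by omega
    have h := Qd (p - k)
    rwa [this] at h
  -- now conclude for each coordinate, first at a = x i
  have main : ∀ (i : Fin p) (x : ∀ j, X j), y i (σ i x) (x i) = y' i (σ i x) (x i) := by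
    intro i x
    have hk : (i:ℕ) < p := i.isLt
    have hi : (⟨(i:ℕ), hk⟩ : Fin p) = i := Fin.eta i hk
    have hQ1 := Qall ((i:ℕ) + 1) hk x
    have hQ0 := Qall (i:ℕ) (le_of_lt hk) x
    have hnot : i ∉ Finset.univ.filter (fun j : Fin p => (j:ℕ) < (i:ℕ)) := by simp
    rw [stage_insert (i:ℕ) hk, hi, Finset.prod_insert hnot, Finset.prod_insert hnot] at hQ1
    have hpos : 0 < ∏ j ∈ Finset.univ.filter (fun j : Fin p => (j:ℕ) < (i:ℕ)),
        y' j (σ j x) (x j) :=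
      Finset.prod_pos fun j _ => (hy' j x (x j)).1
    rw [hQ0] at hQ1
    exact mul_right_cancel₀ (ne_of_gt hpos) hQ1
  intro i x a
  have hσeq : σ i (Function.update x i a) = σ i x := by
    apply hσ
    intro j hj
    exact Function.update_of_ne (ne_of_lt hj) a x
  have h := main i (Function.update x i a)
  rwa [hσeq, Function.update_self] at h
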